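/- For all Schwartz functions f, g on ℝ^{2n+1}: f *₁ g = f *₀ g − Σ_{j=1}^n ∂₃(T_{1j}f *₀ T_{2j}g) + ∫₀¹ (1−θ) Σ_{j=1}^n Σ_{k=1}^n ∂₃²(T_{1j}T_{1k}f *_θ T_{2j}T_{2k}g) dθ. -/

import Mathlib

open MeasureTheory Complex Topology Filter
open scoped RealInnerProductSpace ENNReal

noncomputable section

/-- `ℝⁿ` as a Euclidean space. -/
abbrev E (n : ℕ) := EuclideanSpace ℝ (Fin n)

/-- The underlying space `ℝⁿ × ℝⁿ × ℝ` of the Heisenberg group `𝕙ⁿ`. -/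
abbrev H (n : ℕ) := E n × E n × ℝ

/-- Heisenberg multiplication. -/
def hmul {n : ℕ} (u v : H n) : H n :=
  (u.1 + v.1, u.2.1 + v.2.1, u.2.2 + v.2.2 + ⟪u.1, v.2.1⟫)

/-- Heisenberg inverse. -/
def hinv {n : ℕ} (u : H n) : H n := (-u.1, -u.2.1, -u.2.2 + ⟪u.1, u.2.1⟫)

/-- Heisenberg convolution `(F *₁ G)(u) = ∫ F(u ∘ v⁻¹) G(v) dv`. -/
def conv1 {n : ℕ} (F G : H n → ℂ) (u : H n) : ℂ := ∫ v, F (hmul u (hinv v)) * G v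

/-- The interpolated convolution
`(F *_θ G)(u) = ∫ F(u₁−v₁, u₂−v₂, u₃−v₃−θ(u₁−v₁)·v₂) G(v) dv`. -/
def convθ {n : ℕ} (θ : ℝ) (F G : H n → ℂ) (u : H n) : ℂ :=
  ∫ v, F (u.1 - v.1, u.2.1 - v.2.1, u.2.2 - v.2.2 - θ * ⟪u.1 - v.1, v.2.1⟫) * G v

/-- The partial derivative `∂₃` in the central variable `u₃`. -/
def d3 {n : ℕ} (F : H n → ℂ) (u : H n) : ℂ :=
  fderiv ℝ F u ((0 : E n), (0 : E n), (1 : ℝ))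

namespace Statement4Aux

variable {n : ℕ}

instance : (volume : Measure (E n × ℝ)).IsAddHaarMeasure := Measure.prod.instIsAddHaarMeasure _ _
instance : (volume : Measure (H n)).IsAddHaarMeasure := Measure.prod.instIsAddHaarMeasure _ _

/-! ### Multiplication and differentiation operators on Schwartz space -/

def mulB : ℂ →L[ℝ] ℝ →L[ℝ] ℂ := (ContinuousLinearMap.lsmul ℝ ℝ).flip

def c1 (n : ℕ) (j : Fin n) : H n →L[ℝ] ℝ :=
  (EuclideanSpace.proj j).comp (ContinuousLinearMap.fst ℝ (E n) (E n × ℝ))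

def c2 (n : ℕ) (j : Fin n) : H n →L[ℝ] ℝ :=
  ((EuclideanSpace.proj j).comp (ContinuousLinearMap.fst ℝ (E n) ℝ)).comp
    (ContinuousLinearMap.snd ℝ (E n) (E n × ℝ))

def T1 (j : Fin n) : SchwartzMap (H n) ℂ →L[ℝ] SchwartzMap (H n) ℂ :=
  SchwartzMap.bilinLeftCLM mulB (c1 n j).hasTemperateGrowth

def T2 (j : Fin n) : SchwartzMap (H n) ℂ →L[ℝ] SchwartzMap (H n) ℂ :=
  SchwartzMap.bilinLeftCLM mulB (c2 n j).hasTemperateGrowth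

lemma T1_apply (j : Fin n) (f : SchwartzMap (H n) ℂ) (x : H n) :
    T1 j f x = (x.1 j : ℂ) * f x := by
  show mulB (f x) (c1 n j x) = _
  simp [mulB, c1, Complex.real_smul]

lemma T2_apply (j : Fin n) (f : SchwartzMap (H n) ℂ) (x : H n) :
    T2 j f x = (x.2.1 j : ℂ) * f x := by
  show mulB (f x) (c2 n j x) = _
  simp [mulB, c2, Complex.real_smul]

def e3 (n : ℕ) : H n := (0, 0, 1)

def D3 : SchwartzMap (H n) ℂ →L[ℝ] SchwartzMap (H n) ℂ := LineDeriv.lineDerivOpCLM ℝ (SchwartzMap (H n) ℂ) (e3 n)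

lemma D3_apply (f : SchwartzMap (H n) ℂ) (x : H n) : D3 f x = fderiv ℝ f x (e3 n) :=
  rfl

lemma commD3T1 (j : Fin n) (f : SchwartzMap (H n) ℂ) : T1 j (D3 f) = D3 (T1 j f) := by
  ext x
  rw [T1_apply, D3_apply, D3_apply]
  have hF : (⇑(T1 j f) : H n → ℂ) = fun y => (c1 n j y) • f y := by
    funext y; rw [T1_apply]; simp [c1, Complex.real_smul]
  rw [hF]
  have h1 : HasFDerivAt (fun y : H n => (c1 n j y) • f y)
      ((c1 n j x) • fderiv ℝ f x + (c1 n j).smulRight (f x)) x :=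
    (c1 n j).hasFDerivAt.smul f.differentiableAt.hasFDerivAt
  rw [h1.fderiv]
  have h0 : c1 n j (e3 n) = 0 := by simp [c1, e3]
  simp [h0, Complex.real_smul, c1, e3]

/-! ### The point map and basic integrability -/

def pt (u : H n) (θ : ℝ) (v : H n) : H n :=
  (u.1 - v.1, u.2.1 - v.2.1, u.2.2 - v.2.2 - θ * ⟪u.1 - v.1, v.2.1⟫)

lemma convθ_eq (θ : ℝ) (F G : H n → ℂ) (u : H n) :
    convθ θ F G u = ∫ v, F (pt u θ v) * G v := rfl

lemma cont_pt_v (u : H n) (θ : ℝ) : Continuous fun v : H n => pt u θ v := by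
  unfold pt
  refine (continuous_const.sub continuous_fst).prodMk (Continuous.prodMk ?_ ?_)
  · exact continuous_const.sub (continuous_fst.comp continuous_snd)
  · refine Continuous.sub (continuous_const.sub (continuous_snd.comp continuous_snd)) ?_
    exact continuous_const.mul
      (Continuous.inner (continuous_const.sub continuous_fst) (continuous_fst.comp continuous_snd))

lemma integrable_pt_mul (u : H n) (θ : ℝ) (F G : SchwartzMap (H n) ℂ) :
    Integrable (fun v => F (pt u θ v) * G v) volume := by
  refine G.integrable.bdd_mul ?_ (ae_of_all _ fun v => F.norm_le_seminorm ℝ _)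
  exact (F.continuous.comp (cont_pt_v u θ)).aestronglyMeasurable

/-! ### The linear part of `u ↦ pt u θ v` -/

def ι3 (n : ℕ) : ℝ →L[ℝ] H n :=
  (0 : ℝ →L[ℝ] E n).prod ((0 : ℝ →L[ℝ] E n).prod (ContinuousLinearMap.id ℝ ℝ))

def c1v (n : ℕ) (v : H n) : H n →L[ℝ] ℝ :=
  (innerSL ℝ v.2.1).comp (ContinuousLinearMap.fst ℝ (E n) (E n × ℝ))

def Lmap (n : ℕ) (θ : ℝ) (v : H n) : H n →L[ℝ] H n :=
  ContinuousLinearMap.id ℝ (H n) - θ • (ι3 n).comp (c1v n v)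

lemma Lmap_apply (θ : ℝ) (v w : H n) :
    Lmap n θ v w = (w.1, w.2.1, w.2.2 - θ * ⟪v.2.1, w.1⟫) := by
  show w - θ • (ι3 n) ((c1v n v) w) = _
  have h : (ι3 n) ((c1v n v) w) = ((0 : E n), (0 : E n), (⟪v.2.1, w.1⟫ : ℝ)) := rfl
  rw [h, Prod.ext_iff, Prod.ext_iff]
  refine ⟨by simp, by simp, by simp [Prod.smul_def]⟩

lemma Lmap_e3 (θ : ℝ) (v : H n) : Lmap n θ v (e3 n) = e3 n := by
  rw [Lmap_apply]; simp [e3]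

lemma Lmap_norm (θ : ℝ) (v : H n) : ‖Lmap n θ v‖ ≤ 1 + |θ| * ‖v‖ := by
  refine ContinuousLinearMap.opNorm_le_bound _ (by positivity) fun w => ?_
  rw [Lmap_apply]
  have h1 : ‖w.1‖ ≤ ‖w‖ := norm_fst_le w
  have h2 : ‖w.2.1‖ ≤ ‖w‖ := (norm_fst_le w.2).trans (norm_snd_le w)
  have hi : |⟪v.2.1, w.1⟫| ≤ ‖v.2.1‖ * ‖w.1‖ := abs_real_inner_le_norm _ _
  have hv : ‖v.2.1‖ ≤ ‖v‖ := (norm_fst_le v.2).trans (norm_snd_le v)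
  have h4 : |w.2.2| ≤ ‖w‖ := (norm_snd_le w.2).trans (norm_snd_le w)
  have h3 : |w.2.2 - θ * ⟪v.2.1, w.1⟫| ≤ (1 + |θ| * ‖v‖) * ‖w‖ := by
    calc |w.2.2 - θ * ⟪v.2.1, w.1⟫| ≤ |w.2.2| + |θ * ⟪v.2.1, w.1⟫| := abs_sub _ _
      _ = |w.2.2| + |θ| * |⟪v.2.1, w.1⟫| := by rw [abs_mul]
      _ ≤ (1 + |θ| * ‖v‖) * ‖w‖ := by
          have hx : |θ| * |⟪v.2.1, w.1⟫| ≤ |θ| * (‖v‖ * ‖w‖) :=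
            mul_le_mul_of_nonneg_left
              (hi.trans (mul_le_mul hv h1 (norm_nonneg _) (norm_nonneg _))) (abs_nonneg θ)
          nlinarith [hx]
  have hnorm : ‖((w.1, w.2.1, w.2.2 - θ * ⟪v.2.1, w.1⟫) : H n)‖
      = max ‖w.1‖ (max ‖w.2.1‖ |w.2.2 - θ * ⟪v.2.1, w.1⟫|) := by
    rw [Prod.norm_def, Prod.norm_def]; rfl
  rw [hnorm]
  have hw' : ‖w‖ ≤ (1 + |θ| * ‖v‖) * ‖w‖ := by nlinarith [norm_nonneg w, mul_nonneg (abs_nonneg θ) (norm_nonneg v)]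
  exact max_le (h1.trans hw') (max_le (h2.trans hw') h3)

lemma cont_Lmap (θ : ℝ) : Continuous fun v : H n => Lmap n θ v := by
  refine continuous_const.sub (Continuous.const_smul (Continuous.clm_comp continuous_const ?_) θ)
  exact Continuous.clm_comp ((innerSL ℝ).continuous.comp (continuous_fst.comp continuous_snd))
    continuous_const

lemma hasFDeriv_pt (θ : ℝ) (v u : H n) :
    HasFDerivAt (fun u : H n => pt u θ v) (Lmap n θ v) u := by
  have hfun : (fun u : H n => pt u θ v)
      = fun u => Lmap n θ v u + (-v.1, -v.2.1, -v.2.2 + θ * ⟪v.1, v.2.1⟫) := by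
    funext u
    rw [Lmap_apply, pt, Prod.ext_iff, Prod.ext_iff]
    refine ⟨by simp [sub_eq_add_neg], by simp [sub_eq_add_neg], ?_⟩
    show u.2.2 - v.2.2 - θ * ⟪u.1 - v.1, v.2.1⟫
        = u.2.2 - θ * ⟪v.2.1, u.1⟫ + (-v.2.2 + θ * ⟪v.1, v.2.1⟫)
    rw [inner_sub_left, real_inner_comm v.2.1 u.1]
    ring
  rw [hfun]
  exact (Lmap n θ v).hasFDerivAt.add_const _

/-! ### Differentiation in `u` under the integral -/

def FA (θ : ℝ) (F G : SchwartzMap (H n) ℂ) (u v : H n) : H n →L[ℝ] ℂ :=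
  G v • ((SchwartzMap.fderivCLM ℝ (H n) ℂ F (pt u θ v)).comp (Lmap n θ v))

lemma cont_FA (θ : ℝ) (F G : SchwartzMap (H n) ℂ) (u : H n) :
    Continuous fun v => FA θ F G u v := by
  unfold FA
  exact G.continuous.fun_smul (Continuous.clm_comp
    ((SchwartzMap.fderivCLM ℝ (H n) ℂ F).continuous.comp (cont_pt_v u θ)) (cont_Lmap θ))

lemma norm_FA_le (θ : ℝ) (F G : SchwartzMap (H n) ℂ) (u v : H n) :
    ‖FA θ F G u v‖
      ≤ SchwartzMap.seminorm ℝ 0 0 (SchwartzMap.fderivCLM ℝ (H n) ℂ F) * (1 + |θ| * ‖v‖) * ‖G v‖ := by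
  set M := SchwartzMap.seminorm ℝ 0 0 (SchwartzMap.fderivCLM ℝ (H n) ℂ F) with hM
  have hM0 : 0 ≤ M := apply_nonneg _ _
  have hL : ‖Lmap n θ v‖ ≤ 1 + |θ| * ‖v‖ := Lmap_norm θ v
  have h2 : ‖SchwartzMap.fderivCLM ℝ (H n) ℂ F (pt u θ v)‖ ≤ M :=
    (SchwartzMap.fderivCLM ℝ (H n) ℂ F).norm_le_seminorm ℝ _
  have hcomp : ‖((SchwartzMap.fderivCLM ℝ (H n) ℂ F) (pt u θ v)).comp (Lmap n θ v)‖
      ≤ M * (1 + |θ| * ‖v‖) :=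
    (ContinuousLinearMap.opNorm_comp_le _ _).trans (mul_le_mul h2 hL (norm_nonneg _) hM0)
  rw [FA]
  have hs : ‖G v • (((SchwartzMap.fderivCLM ℝ (H n) ℂ F) (pt u θ v)).comp (Lmap n θ v))‖
      ≤ ‖G v‖ * ‖((SchwartzMap.fderivCLM ℝ (H n) ℂ F) (pt u θ v)).comp (Lmap n θ v)‖ :=
    norm_smul_le (G v) (((SchwartzMap.fderivCLM ℝ (H n) ℂ F) (pt u θ v)).comp (Lmap n θ v))
  refine hs.trans ?_
  refine (mul_le_mul_of_nonneg_left hcomp (norm_nonneg _)).trans ?_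
  exact le_of_eq (by ring)

lemma integrable_bound1 (θ : ℝ) (G : SchwartzMap (H n) ℂ) (M : ℝ) :
    Integrable (fun v : H n => M * (1 + |θ| * ‖v‖) * ‖G v‖) volume := by
  have h1 : Integrable (fun v : H n => M * ‖G v‖ + M * |θ| * (‖v‖ ^ 1 * ‖G v‖)) volume :=
    (G.integrable.norm.const_mul M).add ((G.integrable_pow_mul volume 1).const_mul (M * |θ|))
  exact h1.congr (ae_of_all _ fun v => by ring)

lemma integrable_FA (θ : ℝ) (F G : SchwartzMap (H n) ℂ) (u : H n) :
    Integrable (fun v => FA θ F G u v) volume := by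
  refine ((integrable_bound1 θ G _).mono' (cont_FA θ F G u).aestronglyMeasurable
    (ae_of_all _ fun v => norm_FA_le θ F G u v))

lemma hasFDerivAt_convθ (θ : ℝ) (F G : SchwartzMap (H n) ℂ) (u : H n) :
    HasFDerivAt (convθ θ ⇑F ⇑G) (∫ v, FA θ F G u v) u := by
  have key : HasFDerivAt (fun x : H n => ∫ v, F (pt x θ v) * G v) (∫ v, FA θ F G u v) u := by
    apply hasFDerivAt_integral_of_dominated_of_fderiv_le (F' := fun x v => FA θ F G x v)
      (bound := fun v => SchwartzMap.seminorm ℝ 0 0 (SchwartzMap.fderivCLM ℝ (H n) ℂ F)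
        * (1 + |θ| * ‖v‖) * ‖G v‖) (s := Metric.ball u 1) (Metric.ball_mem_nhds _ one_pos)
    · exact Eventually.of_forall fun x =>
        ((F.continuous.comp (cont_pt_v x θ)).mul G.continuous).aestronglyMeasurable
    · exact integrable_pt_mul u θ F G
    · exact (cont_FA θ F G u).aestronglyMeasurable
    · exact ae_of_all _ fun v x _ => norm_FA_le θ F G x v
    · exact integrable_bound1 θ G _
    · refine ae_of_all _ fun v x _ => ?_
      have h1 : HasFDerivAt (fun x : H n => F (pt x θ v))
          ((fderiv ℝ F (pt x θ v)).comp (Lmap n θ v)) x :=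
        (F.differentiableAt.hasFDerivAt).comp x (hasFDeriv_pt θ v x)
      have h2 := h1.mul_const (G v)
      have h3 : FA θ F G x v = G v • ((fderiv ℝ F (pt x θ v)).comp (Lmap n θ v)) := by
        rw [FA, SchwartzMap.fderivCLM_apply]
      rw [h3]
      exact h2
  exact key

lemma d3_convθ (θ : ℝ) (F G : SchwartzMap (H n) ℂ) :
    d3 (convθ θ ⇑F ⇑G) = convθ θ ⇑(D3 F) ⇑G := by
  funext u
  have h := hasFDerivAt_convθ θ F G u
  have h2 : d3 (convθ θ ⇑F ⇑G) u = (∫ v, FA θ F G u v) (e3 n) := by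
    rw [d3, h.fderiv]; rfl
  rw [h2, ContinuousLinearMap.integral_apply (integrable_FA θ F G u)]
  rw [convθ_eq]
  congr 1
  funext v
  rw [FA, ContinuousLinearMap.smul_apply, ContinuousLinearMap.comp_apply, Lmap_e3,
    SchwartzMap.fderivCLM_apply, ← D3_apply, smul_eq_mul]
  ring

/-! ### Differentiation in `θ` under the integral -/

lemma hasDerivAt_pt_theta (u v : H n) (θ : ℝ) :
    HasDerivAt (fun θ : ℝ => pt u θ v) ((-⟪u.1 - v.1, v.2.1⟫ : ℝ) • e3 n) θ := by
  have hfun : (fun θ : ℝ => pt u θ v)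
      = fun θ : ℝ => ((u.1 - v.1, u.2.1 - v.2.1, u.2.2 - v.2.2) : H n)
          + θ • ((-⟪u.1 - v.1, v.2.1⟫ : ℝ) • e3 n) := by
    funext θ
    have he : (θ • ((-⟪u.1 - v.1, v.2.1⟫ : ℝ) • e3 n) : H n)
        = ((0 : E n), (0 : E n), (θ * (-⟪u.1 - v.1, v.2.1⟫) : ℝ)) := by
      rw [e3, Prod.ext_iff, Prod.ext_iff]
      exact ⟨by simp, by simp, by simp⟩
    rw [pt, he, Prod.ext_iff, Prod.ext_iff]
    refine ⟨by simp, by simp, ?_⟩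
    show u.2.2 - v.2.2 - θ * ⟪u.1 - v.1, v.2.1⟫
        = u.2.2 - v.2.2 + θ * (-⟪u.1 - v.1, v.2.1⟫)
    ring
  rw [hfun]
  have h := ((hasDerivAt_id θ).smul_const ((-⟪u.1 - v.1, v.2.1⟫ : ℝ) • e3 n)).const_add
    (((u.1 - v.1, u.2.1 - v.2.1, u.2.2 - v.2.2) : H n))
  simpa using h

def FB (F G : SchwartzMap (H n) ℂ) (u : H n) (θ : ℝ) (v : H n) : ℂ :=
  (-⟪u.1 - v.1, v.2.1⟫ : ℝ) • (D3 F (pt u θ v) * G v)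

lemma hasDerivAt_FB (F G : SchwartzMap (H n) ℂ) (u v : H n) (θ : ℝ) :
    HasDerivAt (fun θ : ℝ => F (pt u θ v) * G v) (FB F G u θ v) θ := by
  have h1 := (F.differentiableAt.hasFDerivAt).comp_hasDerivAt θ (hasDerivAt_pt_theta u v θ)
  have h2 := h1.mul_const (G v)
  have h3 : fderiv ℝ F (pt u θ v) ((-⟪u.1 - v.1, v.2.1⟫ : ℝ) • e3 n) * G v = FB F G u θ v := by
    rw [ContinuousLinearMap.map_smul, FB, D3_apply, smul_mul_assoc]
  exact h3 ▸ h2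

lemma norm_FB_le (F G : SchwartzMap (H n) ℂ) (u v : H n) (θ : ℝ) :
    ‖FB F G u θ v‖ ≤ SchwartzMap.seminorm ℝ 0 0 (D3 F) * ((‖u‖ + ‖v‖) * ‖v‖) * ‖G v‖ := by
  set M := SchwartzMap.seminorm ℝ 0 0 (D3 F) with hM
  have hM0 : 0 ≤ M := apply_nonneg _ _
  rw [FB]
  have hnorm : ‖(-⟪u.1 - v.1, v.2.1⟫ : ℝ) • (D3 F (pt u θ v) * G v)‖
      = |⟪u.1 - v.1, v.2.1⟫| * (‖D3 F (pt u θ v)‖ * ‖G v‖) := by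
    rw [norm_smul, norm_mul, Real.norm_eq_abs, abs_neg]
  rw [hnorm]
  have ha : |⟪u.1 - v.1, v.2.1⟫| ≤ (‖u‖ + ‖v‖) * ‖v‖ := by
    refine (abs_real_inner_le_norm _ _).trans ?_
    have h1 : ‖u.1 - v.1‖ ≤ ‖u‖ + ‖v‖ :=
      (norm_sub_le _ _).trans (add_le_add (norm_fst_le u) (norm_fst_le v))
    have h2 : ‖v.2.1‖ ≤ ‖v‖ := (norm_fst_le v.2).trans (norm_snd_le v)
    exact mul_le_mul h1 h2 (norm_nonneg _) (by positivity)
  have hD : ‖D3 F (pt u θ v)‖ ≤ M := (D3 F).norm_le_seminorm ℝ _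
  have hstep : |⟪u.1 - v.1, v.2.1⟫| * (‖D3 F (pt u θ v)‖ * ‖G v‖)
      ≤ ((‖u‖ + ‖v‖) * ‖v‖) * (M * ‖G v‖) := by
    refine mul_le_mul ha (mul_le_mul_of_nonneg_right hD (norm_nonneg _)) (by positivity) ?_
    positivity
  refine hstep.trans (le_of_eq (by ring))

lemma cont_FB (F G : SchwartzMap (H n) ℂ) (u : H n) (θ : ℝ) :
    Continuous fun v => FB F G u θ v := by
  unfold FB
  refine Continuous.fun_smul ?_ (((D3 F).continuous.comp (cont_pt_v u θ)).mul G.continuous)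
  exact (Continuous.inner (continuous_const.sub continuous_fst)
    (continuous_fst.comp continuous_snd)).neg

lemma integrable_bound2 (G : SchwartzMap (H n) ℂ) (M c : ℝ) :
    Integrable (fun v : H n => M * ((c + ‖v‖) * ‖v‖) * ‖G v‖) volume := by
  have h1 : Integrable (fun v : H n => M * c * (‖v‖ ^ 1 * ‖G v‖) + M * (‖v‖ ^ 2 * ‖G v‖)) volume :=
    ((G.integrable_pow_mul volume 1).const_mul (M * c)).add
      ((G.integrable_pow_mul volume 2).const_mul M)
  exact h1.congr (ae_of_all _ fun v => by ring)

lemma hasDerivAt_convθ_raw (F G : SchwartzMap (H n) ℂ) (u : H n) (θ₀ : ℝ) :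
    HasDerivAt (fun θ => convθ θ ⇑F ⇑G u) (∫ v, FB F G u θ₀ v) θ₀ := by
  have key := hasDerivAt_integral_of_dominated_loc_of_deriv_le (μ := volume)
    (F := fun (θ : ℝ) (v : H n) => F (pt u θ v) * G v) (F' := fun θ v => FB F G u θ v)
    (bound := fun v => SchwartzMap.seminorm ℝ 0 0 (D3 F) * ((‖u‖ + ‖v‖) * ‖v‖) * ‖G v‖)
    (x₀ := θ₀) (s := Metric.ball θ₀ 1) (Metric.ball_mem_nhds _ one_pos)
    (Eventually.of_forall fun θ =>
      ((F.continuous.comp (cont_pt_v u θ)).mul G.continuous).aestronglyMeasurable)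
    (integrable_pt_mul u θ₀ F G)
    (cont_FB F G u θ₀).aestronglyMeasurable
    (ae_of_all _ fun v θ _ => norm_FB_le F G u v θ)
    (integrable_bound2 G _ _)
    (ae_of_all _ fun v θ _ => hasDerivAt_FB F G u v θ)
  exact key.2

lemma integral_FB_eq (F G : SchwartzMap (H n) ℂ) (u : H n) (θ : ℝ) :
    ∫ v, FB F G u θ v = ∑ j : Fin n, -(convθ θ ⇑(T1 j (D3 F)) ⇑(T2 j G) u) := by
  have hpt : ∀ v, FB F G u θ v
      = ∑ j : Fin n, -((T1 j (D3 F)) (pt u θ v) * (T2 j G) v) := by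
    intro v
    rw [FB]
    have hinner : (⟪u.1 - v.1, v.2.1⟫ : ℝ) = ∑ j : Fin n, (u.1 - v.1) j * v.2.1 j := by
      simp [PiLp.inner_apply, RCLike.inner_apply, conj_trivial, mul_comm]
    rw [hinner, neg_smul, Finset.sum_smul, ← Finset.sum_neg_distrib]
    refine Finset.sum_congr rfl fun j _ => ?_
    rw [T1_apply, T2_apply]
    have hpt1 : (pt u θ v).1 = u.1 - v.1 := rfl
    rw [hpt1, Complex.real_smul]
    push_cast
    ring
  calc ∫ v, FB F G u θ v
      = ∫ v, ∑ j : Fin n, -((T1 j (D3 F)) (pt u θ v) * (T2 j G) v) := by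
        congr 1; funext v; exact hpt v
    _ = ∑ j : Fin n, ∫ v, -((T1 j (D3 F)) (pt u θ v) * (T2 j G) v) :=
        integral_finset_sum _ (fun j _ => (integrable_pt_mul u θ (T1 j (D3 F)) (T2 j G)).neg)
    _ = ∑ j : Fin n, -(convθ θ ⇑(T1 j (D3 F)) ⇑(T2 j G) u) := by
        refine Finset.sum_congr rfl fun j _ => ?_
        rw [integral_neg, convθ_eq]

lemma hasDerivAt_convθ_theta (F G : SchwartzMap (H n) ℂ) (u : H n) (θ₀ : ℝ) :
    HasDerivAt (fun θ => convθ θ ⇑F ⇑G u)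
      (∑ j : Fin n, -(convθ θ₀ ⇑(T1 j (D3 F)) ⇑(T2 j G) u)) θ₀ := by
  have h := hasDerivAt_convθ_raw F G u θ₀
  rwa [integral_FB_eq] at h

/-! ### Second-order Taylor formula with integral remainder -/

lemma taylor2 (φ φ' φ'' : ℝ → ℂ)
    (h1 : ∀ θ, HasDerivAt φ (φ' θ) θ)
    (h2 : ∀ θ, HasDerivAt φ' (φ'' θ) θ)
    (hc : Continuous φ'') :
    φ 1 = φ 0 + φ' 0 + ∫ θ in (0:ℝ)..1, (1 - (θ:ℂ)) * φ'' θ := by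
  have hdiff : Differentiable ℝ φ' := fun θ => (h2 θ).differentiableAt
  have hc1 : Continuous φ' := hdiff.continuous
  have hFTC : ∫ θ in (0:ℝ)..1, φ' θ = φ 1 - φ 0 :=
    intervalIntegral.integral_eq_sub_of_hasDerivAt (fun θ _ => h1 θ)
      (hc1.intervalIntegrable 0 1)
  have hu : ∀ x ∈ Set.uIcc (0:ℝ) 1, HasDerivAt (fun θ : ℝ => 1 - (θ:ℂ)) (-1) x := by
    intro x _
    have hid : HasDerivAt (fun θ : ℝ => (θ:ℂ)) 1 x := by
      simpa using (hasDerivAt_id x).ofReal_comp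
    simpa using hid.const_sub 1
  have hIBP := intervalIntegral.integral_mul_deriv_eq_deriv_mul hu (fun x _ => h2 x)
    (continuous_const.intervalIntegrable 0 1) (hc.intervalIntegrable 0 1)
  have hneg : ∫ x in (0:ℝ)..1, (-1 : ℂ) * φ' x = -(∫ x in (0:ℝ)..1, φ' x) := by
    simp [neg_one_mul, intervalIntegral.integral_neg]
  rw [hIBP, hneg, hFTC]
  push_cast
  ring

/-! ### Miscellaneous rewriting lemmas -/

lemma conv1_eq_convθ_one (F G : H n → ℂ) (u : H n) : conv1 F G u = convθ 1 F G u := by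
  rw [conv1, convθ]
  congr 1; funext v
  have harg : hmul u (hinv v)
      = (u.1 - v.1, u.2.1 - v.2.1, u.2.2 - v.2.2 - 1 * ⟪u.1 - v.1, v.2.1⟫) := by
    rw [hmul, hinv, Prod.ext_iff, Prod.ext_iff]
    refine ⟨by simp [sub_eq_add_neg], by simp [sub_eq_add_neg], ?_⟩
    show u.2.2 + (-v.2.2 + ⟪v.1, v.2.1⟫) + ⟪u.1, -v.2.1⟫
        = u.2.2 - v.2.2 - 1 * ⟪u.1 - v.1, v.2.1⟫
    rw [inner_neg_right, inner_sub_left]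
    ring
  rw [harg]

lemma phi''_eq (f g : SchwartzMap (H n) ℂ) (u : H n) (θ : ℝ) :
    ∑ j : Fin n, ∑ k : Fin n, convθ θ ⇑(T1 k (D3 (T1 j (D3 f)))) ⇑(T2 k (T2 j g)) u
      = ∑ j : Fin n, ∑ k : Fin n, convθ θ ⇑(D3 (D3 (T1 j (T1 k f)))) ⇑(T2 j (T2 k g)) u := by
  rw [Finset.sum_comm]
  refine Finset.sum_congr rfl fun x _ => Finset.sum_congr rfl fun y _ => ?_
  rw [commD3T1 y f, commD3T1 x (D3 (T1 y f)), commD3T1 x (T1 y f)]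

end Statement4Aux

theorem statement4 (n : ℕ) (f g : SchwartzMap (H n) ℂ) (u : H n) :
    conv1 (⇑f) (⇑g) u
      = convθ 0 (⇑f) (⇑g) u
        - ∑ j : Fin n,
            d3 (convθ 0 (fun w => (w.1 j : ℂ) * f w) (fun w => (w.2.1 j : ℂ) * g w)) u
        + ∫ θ in (0:ℝ)..1, (1 - (θ:ℂ)) *
            ∑ j : Fin n, ∑ k : Fin n,
              d3 (d3 (convθ θ
                (fun w => (w.1 j : ℂ) * ((w.1 k : ℂ) * f w))
                (fun w => (w.2.1 j : ℂ) * ((w.2.1 k : ℂ) * g w)))) u := by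
  classical
  open Statement4Aux in
  have hd1 : ∀ θ : ℝ, HasDerivAt (fun t => convθ t ⇑f ⇑g u)
      (∑ j : Fin n, -(convθ θ ⇑(T1 j (D3 f)) ⇑(T2 j g) u)) θ :=
    fun θ => hasDerivAt_convθ_theta f g u θ
  have hd2 : ∀ θ : ℝ, HasDerivAt (fun t => ∑ j : Fin n, -(convθ t ⇑(T1 j (D3 f)) ⇑(T2 j g) u))
      (∑ j : Fin n, ∑ k : Fin n,
        convθ θ ⇑(T1 k (D3 (T1 j (D3 f)))) ⇑(T2 k (T2 j g)) u) θ := by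
    intro θ
    have h := HasDerivAt.fun_sum (u := Finset.univ)
      (fun j _ => (hasDerivAt_convθ_theta (T1 j (D3 f)) (T2 j g) u θ).neg)
    simpa [Finset.sum_neg_distrib, neg_neg] using h
  have hc2 : Continuous fun t => ∑ j : Fin n, ∑ k : Fin n,
      convθ t ⇑(T1 k (D3 (T1 j (D3 f)))) ⇑(T2 k (T2 j g)) u := by
    refine continuous_finset_sum _ fun j _ => continuous_finset_sum _ fun k _ => ?_
    have hdiff : Differentiable ℝ
        (fun t => convθ t ⇑(T1 k (D3 (T1 j (D3 f)))) ⇑(T2 k (T2 j g)) u) :=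
      fun θ => (hasDerivAt_convθ_theta _ _ u θ).differentiableAt
    exact hdiff.continuous
  have ht := taylor2 (fun t => convθ t ⇑f ⇑g u)
    (fun t => ∑ j : Fin n, -(convθ t ⇑(T1 j (D3 f)) ⇑(T2 j g) u))
    (fun t => ∑ j : Fin n, ∑ k : Fin n,
      convθ t ⇑(T1 k (D3 (T1 j (D3 f)))) ⇑(T2 k (T2 j g)) u)
    hd1 hd2 hc2
  have hS : (∑ j : Fin n,
      d3 (convθ 0 (fun w => (w.1 j : ℂ) * f w) (fun w => (w.2.1 j : ℂ) * g w)) u)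
      = -(∑ j : Fin n, -(convθ 0 ⇑(T1 j (D3 f)) ⇑(T2 j g) u)) := by
    rw [Finset.sum_neg_distrib, neg_neg]
    refine Finset.sum_congr rfl fun j _ => ?_
    have e1 : (fun w : H n => (w.1 j : ℂ) * f w) = ⇑(T1 j f) :=
      funext fun w => (T1_apply j f w).symm
    have e2 : (fun w : H n => (w.2.1 j : ℂ) * g w) = ⇑(T2 j g) :=
      funext fun w => (T2_apply j g w).symm
    rw [e1, e2, d3_convθ, commD3T1 j f]
  have hR : (∫ θ in (0:ℝ)..1, (1 - (θ:ℂ)) *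
      ∑ j : Fin n, ∑ k : Fin n,
        d3 (d3 (convθ θ
          (fun w => (w.1 j : ℂ) * ((w.1 k : ℂ) * f w))
          (fun w => (w.2.1 j : ℂ) * ((w.2.1 k : ℂ) * g w)))) u)
      = ∫ θ in (0:ℝ)..1, (1 - (θ:ℂ)) *
          ∑ j : Fin n, ∑ k : Fin n,
            convθ θ ⇑(T1 k (D3 (T1 j (D3 f)))) ⇑(T2 k (T2 j g)) u := by
    refine intervalIntegral.integral_congr fun θ _ => ?_
    congr 1
    rw [phi''_eq f g u θ]
    refine Finset.sum_congr rfl fun j _ => Finset.sum_congr rfl fun k _ => ?_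
    have e1 : (fun w : H n => (w.1 j : ℂ) * ((w.1 k : ℂ) * f w)) = ⇑(T1 j (T1 k f)) := by
      funext w; rw [T1_apply, T1_apply]
    have e2 : (fun w : H n => (w.2.1 j : ℂ) * ((w.2.1 k : ℂ) * g w)) = ⇑(T2 j (T2 k g)) := by
      funext w; rw [T2_apply, T2_apply]
    rw [e1, e2, d3_convθ, d3_convθ]
  rw [conv1_eq_convθ_one, hS, hR, sub_neg_eq_add]
  exact ht
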